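/- (Gauge Cârjă–Ursescu principle.) Let (M,≤) be a nonempty quasi-ordered set that is sequentially inductive, and let Φ = (φ_i; i ≥ 0) be a sequence of functions φ_i : M → ℝ ∪ {−∞,+∞}, each decreasing (no boundedness assumed). Then the set max(M;≤;Φ) of (≤,Φ)-maximal points is ≤-cofinal and ≤-invariant in M. -/

import Mathlib

noncomputable def gEmb : EReal → ℝ := fun x =>
  if x = ⊤ then 2 else if x = ⊥ then -2 else Real.arctan x.toReal

lemma pi_div_two_lt_two : Real.pi / 2 < 2 := by
  have := Real.pi_lt_d2
  linarith

lemma gEmb_strictMono : StrictMono gEmb := by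
  intro a b hab
  induction a using EReal.rec with
  | bot =>
    induction b using EReal.rec with
    | bot => exact absurd hab (lt_irrefl _)
    | coe r =>
      have h1 := Real.neg_pi_div_two_lt_arctan r
      have h2 := pi_div_two_lt_two
      simp only [gEmb, EReal.toReal_coe]
      norm_num
      linarith
    | top => norm_num [gEmb]
  | coe r =>
    induction b using EReal.rec with
    | bot => exact absurd hab (by simp)
    | coe s =>
      simp only [gEmb, EReal.toReal_coe]
      norm_num
      exact EReal.coe_lt_coe_iff.mp hab
    | top =>
      have h1 := Real.arctan_lt_pi_div_two r
      have h2 := pi_div_two_lt_two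
      simp only [gEmb, EReal.toReal_coe]
      norm_num
      linarith
  | top => exact absurd hab (by simp)

lemma gEmb_ge (x : EReal) : -2 ≤ gEmb x := by
  induction x using EReal.rec with
  | bot => simp [gEmb]
  | coe r =>
    have h1 := Real.neg_pi_div_two_lt_arctan r
    have h2 := pi_div_two_lt_two
    simp only [gEmb, EReal.toReal_coe]
    norm_num
    linarith
  | top => norm_num [gEmb]

lemma single_gauge {M : Type*} (le : M → M → Prop) (hrefl : ∀ x, le x x)
    (htrans : ∀ x y z, le x y → le y z → le x z)
    (hind : ∀ x : ℕ → M, (∀ n, le (x n) (x (n + 1))) → ∃ v, ∀ n, le (x n) v)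
    (φ : M → EReal) (hdecr : ∀ x y, le x y → φ y ≤ φ x) (u : M) :
    ∃ v, le u v ∧ ∀ w, le v w → φ v = φ w := by
  classical
  set ψ : M → ℝ := fun x => gEmb (φ x) with hψ
  have hmono : ∀ x y, le x y → ψ y ≤ ψ x := fun x y h =>
    gEmb_strictMono.monotone (hdecr x y h)
  have hbdd : ∀ x : M, BddBelow (ψ '' {w | le x w}) := by
    intro x
    refine ⟨-2, ?_⟩
    rintro r ⟨w, _, rfl⟩
    exact gEmb_ge _
  set c : M → ℝ := fun x => sInf (ψ '' {w | le x w}) with hc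
  have step : ∀ (x : M) (n : ℕ), ∃ y, le x y ∧ ψ y < c x + (1/2)^n := by
    intro x n
    have hne : (ψ '' {w | le x w}).Nonempty := ⟨ψ x, x, hrefl x, rfl⟩
    have hlt : c x < c x + (1/2)^n := by
      have : (0:ℝ) < (1/2)^n := by positivity
      linarith
    obtain ⟨r, ⟨w, hw, rfl⟩, hrlt⟩ := exists_lt_of_csInf_lt hne hlt
    exact ⟨w, hw, hrlt⟩
  set x : ℕ → M := fun n => Nat.rec u (fun n xn => (step xn n).choose) n with hx
  have hchain : ∀ n, le (x n) (x (n+1)) ∧ ψ (x (n+1)) < c (x n) + (1/2)^n :=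
    fun n => (step (x n) n).choose_spec
  obtain ⟨v, hv⟩ := hind x (fun n => (hchain n).1)
  refine ⟨v, hv 0, ?_⟩
  intro w hw
  have h1 : ψ w ≤ ψ v := hmono v w hw
  have h2 : ψ v ≤ ψ w := by
    by_contra hcon
    push_neg at hcon
    obtain ⟨n, hn⟩ := exists_pow_lt_of_lt_one (sub_pos.2 hcon)
      (by norm_num : (1/2:ℝ) < 1)
    have hvx : ψ v ≤ ψ (x (n+1)) := hmono _ _ (hv (n+1))
    have hcw : c (x n) ≤ ψ w :=
      csInf_le (hbdd _) ⟨w, htrans _ _ _ (hv n) hw, rfl⟩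
    have := (hchain n).2
    linarith
  have : ψ v = ψ w := le_antisymm h2 h1
  exact gEmb_strictMono.injective this

theorem stmt_11 {M : Type*} [Nonempty M] (le : M → M → Prop)
    (hrefl : ∀ x, le x x)
    (htrans : ∀ x y z, le x y → le y z → le x z)
    (hind : ∀ x : ℕ → M, (∀ n, le (x n) (x (n + 1))) → ∃ v, ∀ n, le (x n) v)
    (φ : ℕ → M → EReal)
    (hdecr : ∀ i, ∀ x y, le x y → φ i y ≤ φ i x) :
    (∀ u : M, ∃ v, le u v ∧ ∀ i, ∀ w, le v w → φ i v = φ i w) ∧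
    (∀ z, (∀ i, ∀ w, le z w → φ i z = φ i w) →
      ∀ y, le z y → ∀ i, ∀ w, le y w → φ i y = φ i w) := by
  classical
  constructor
  · intro u
    have H : ∀ (i : ℕ) (a : M), ∃ v, le a v ∧ ∀ w, le v w → φ i v = φ i w :=
      fun i a => single_gauge le hrefl htrans hind (φ i) (hdecr i) a
    set x : ℕ → M := fun n => Nat.rec (H 0 u).choose (fun n xn => (H (n+1) xn).choose) n
      with hx
    have hprop : ∀ n, (le (if h : n = 0 then u else x (n-1)) (x n)) ∧
        ∀ w, le (x n) w → φ n (x n) = φ n w := by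
      intro n
      cases n with
      | zero => simpa [hx] using (H 0 u).choose_spec
      | succ m => simpa using (H (m+1) (x m)).choose_spec
    have hasc : ∀ n, le (x n) (x (n+1)) := by
      intro n
      have := (hprop (n+1)).1
      simpa using this
    obtain ⟨v, hv⟩ := hind x hasc
    refine ⟨v, htrans _ _ _ (by simpa using (hprop 0).1) (hv 0), ?_⟩
    intro i w hw
    have hmax := (hprop i).2
    have h1 : φ i (x i) = φ i v := hmax v (hv i)
    have h2 : φ i (x i) = φ i w := hmax w (htrans _ _ _ (hv i) hw)
    rw [← h1, h2]
  · intro z hz y hzy i w hyw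
    have h1 : φ i z = φ i y := hz i y hzy
    have h2 : φ i z = φ i w := hz i w (htrans _ _ _ hzy hyw)
    rw [← h1, h2]
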